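/- Every tree admits a 1-queue layout: there is a linear order of its vertices (e.g., a BFS order) under which no two independent edges are nested. -/

import Mathlib

/-- BFS-style key, defined by fuel recursion on the depth. -/
def treeOneQueueF {V : Type*} (par : V → V) (g : V → ℕ) (n : ℕ) : ℕ → V → ℕ
  | 0, v => g v
  | k + 1, v => treeOneQueueF par g n k (par v) * n + g v

theorem treeOneQueueF_lt {V : Type*} (par : V → V) (g : V → ℕ) (n : ℕ)
    (hg : ∀ w, g w < n) : ∀ k v, treeOneQueueF par g n k v < n ^ (k + 1) := by
  intro k
  induction k with
  | zero => intro v; simpa [treeOneQueueF] using hg v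
  | succ k ih =>
    intro v
    have h1 : treeOneQueueF par g n k (par v) + 1 ≤ n ^ (k + 1) := ih (par v)
    calc treeOneQueueF par g n (k + 1) v
        = treeOneQueueF par g n k (par v) * n + g v := rfl
      _ < treeOneQueueF par g n k (par v) * n + n := by
          exact Nat.add_lt_add_left (hg v) _
      _ = (treeOneQueueF par g n k (par v) + 1) * n := by ring
      _ ≤ n ^ (k + 1) * n := Nat.mul_le_mul_right _ h1
      _ = n ^ (k + 2) := by ring

theorem treeOneQueueF_mod {V : Type*} (par : V → V) (g : V → ℕ) (n : ℕ)
    (hg : ∀ w, g w < n) (k : ℕ) (v : V) :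
    treeOneQueueF par g n k v % n = g v := by
  cases k with
  | zero => simpa [treeOneQueueF] using Nat.mod_eq_of_lt (hg v)
  | succ k =>
    show (treeOneQueueF par g n k (par v) * n + g v) % n = g v
    rw [Nat.mul_add_mod', Nat.mod_eq_of_lt (hg v)]

/-- Every tree admits a 1-queue layout: there is a linear order of its vertices under
which no two independent edges are nested. -/
theorem tree_one_queue {V : Type*} [Fintype V] (G : SimpleGraph V) (hG : G.IsTree) :
    ∃ f : V → ℕ, Function.Injective f ∧
      ∀ a b c d : V, G.Adj a b → G.Adj c d →
        f a < f b → f c < f d →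
        a ≠ c → a ≠ d → b ≠ c → b ≠ d →
        ¬ (f a < f c ∧ f c < f d ∧ f d < f b) := by
  classical
  have hconn : G.Connected := hG.isConnected
  have hacyc : G.IsAcyclic := hG.IsAcyclic
  have hne : Nonempty V := by cases hconn; assumption
  obtain ⟨root⟩ := hne
  set n : ℕ := Fintype.card V with hn
  have hn0 : 0 < n := Fintype.card_pos_iff.mpr ⟨root⟩
  set g : V → ℕ := fun v => ((Fintype.equivFin V) v : ℕ) with hgdef
  have hg_lt : ∀ w, g w < n := fun w => ((Fintype.equivFin V) w).isLt
  have hg_inj : Function.Injective g := fun x y h => by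
    have := Fin.val_injective h
    exact (Fintype.equivFin V).injective this
  set d : V → ℕ := fun v => G.dist root v with hddef
  have hdd : ∀ v, G.dist root v = d v := fun _ => rfl
  -- depth bound
  have hd_lt : ∀ v, d v < n := by
    intro v
    obtain ⟨p, hp, hlen⟩ := hconn.exists_path_of_dist root v
    rw [hdd] at hlen
    have := hp.length_lt
    omega
  -- distance of any vertex on a walk from root
  have hmem_dist : ∀ {x : V} (p : G.Walk root x) {y : V} (hy : y ∈ p.support),
      d y ≤ (p.takeUntil y hy).length := by
    intro x p y hy
    exact SimpleGraph.dist_le _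
  -- adjacent vertices have different depth
  have hadj_ne : ∀ {a b : V}, G.Adj a b → d a ≠ d b := by
    intro a b hab h
    obtain ⟨P, hP, hPlen⟩ := hconn.exists_path_of_dist root a
    rw [hdd] at hPlen
    -- b ∉ P.support
    have hbP : b ∉ P.support := by
      intro hb
      have h1 : d b ≤ (P.takeUntil b hb).length := hmem_dist P hb
      have hspec := P.take_spec hb
      have hlen2 : (P.takeUntil b hb).length + (P.dropUntil b hb).length = P.length := by
        rw [← SimpleGraph.Walk.length_append, hspec]
      have hba : b ≠ a := (G.ne_of_adj hab.symm)
      have hdrop : (P.dropUntil b hb).length ≠ 0 := by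
        intro h0
        exact hba (SimpleGraph.Walk.eq_of_length_eq_zero h0)
      omega
    -- P.concat hab is a path root → b of length d a + 1
    have hQpath : (P.concat hab).IsPath := by
      rw [← SimpleGraph.Walk.isPath_reverse_iff, SimpleGraph.Walk.reverse_concat]
      rw [SimpleGraph.Walk.cons_isPath_iff]
      refine ⟨hP.reverse, ?_⟩
      rw [SimpleGraph.Walk.support_reverse]
      simpa using hbP
    obtain ⟨R, hR, hRlen⟩ := hconn.exists_path_of_dist root b
    rw [hdd] at hRlen
    have := hacyc.path_unique ⟨P.concat hab, hQpath⟩ ⟨R, hR⟩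
    have hlens : (P.concat hab).length = R.length := by
      rw [show (P.concat hab) = R from congrArg Subtype.val this]
    rw [SimpleGraph.Walk.length_concat] at hlens
    omega
  -- adjacent vertices: depth differs by exactly one
  have hadj_step : ∀ {a b : V}, G.Adj a b → d b = d a + 1 ∨ d a = d b + 1 := by
    intro a b hab
    have h1 : G.dist a b = 1 := SimpleGraph.dist_eq_one_iff_adj.mpr hab
    have h2 : G.dist b a = 1 := SimpleGraph.dist_eq_one_iff_adj.mpr hab.symm
    have t1 : G.dist root b ≤ G.dist root a + G.dist a b := hconn.dist_triangle
    have t2 : G.dist root a ≤ G.dist root b + G.dist b a := hconn.dist_triangle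
    have hne' := hadj_ne hab
    rw [hdd, hdd] at t1 t2
    omega
  -- existence of a parent
  have hpar_ex : ∀ v : V, 0 < d v → ∃ u, G.Adj u v ∧ d u + 1 = d v := by
    intro v hv
    obtain ⟨P, hP, hPlen⟩ := hconn.exists_path_of_dist root v
    rw [hdd] at hPlen
    have hPrev : P.reverse.length = d v := by rw [SimpleGraph.Walk.length_reverse]; exact hPlen
    cases hPc : P.reverse with
    | nil =>
      rw [hPc] at hPrev
      simp at hPrev
      omega
    | @cons _ u _ h q =>
      refine ⟨u, h.symm, ?_⟩
      have hql : q.length + 1 = d v := by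
        rw [hPc] at hPrev
        simpa using hPrev
      have hle : d u ≤ q.length := by
        have := SimpleGraph.dist_le q.reverse
        rw [hdd] at this
        simpa [SimpleGraph.Walk.length_reverse] using this
      have hge : d v ≤ d u + 1 := by
        have h1 : G.dist u v = 1 := SimpleGraph.dist_eq_one_iff_adj.mpr h.symm
        have t1 : G.dist root v ≤ G.dist root u + G.dist u v := hconn.dist_triangle
        rw [hdd, hdd] at t1
        omega
      omega
  -- uniqueness of the parent
  have hpar_uniq : ∀ {u u' v : V}, G.Adj u v → G.Adj u' v →
      d u + 1 = d v → d u' + 1 = d v → u = u' := by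
    intro u u' v huv hu'v hu hu'
    obtain ⟨P, hP, hPlen⟩ := hconn.exists_path_of_dist root u
    obtain ⟨P', hP', hP'len⟩ := hconn.exists_path_of_dist root u'
    rw [hdd] at hPlen hP'len
    have hvP : v ∉ P.support := by
      intro hv
      have h1 : d v ≤ (P.takeUntil v hv).length := hmem_dist P hv
      have h2 : (P.takeUntil v hv).length ≤ P.length := SimpleGraph.Walk.length_takeUntil_le _ _
      omega
    have hvP' : v ∉ P'.support := by
      intro hv
      have h1 : d v ≤ (P'.takeUntil v hv).length := hmem_dist P' hv
      have h2 : (P'.takeUntil v hv).length ≤ P'.length := SimpleGraph.Walk.length_takeUntil_le _ _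
      omega
    have hQpath : (P.concat huv).IsPath := by
      rw [← SimpleGraph.Walk.isPath_reverse_iff, SimpleGraph.Walk.reverse_concat,
        SimpleGraph.Walk.cons_isPath_iff]
      refine ⟨hP.reverse, ?_⟩
      rw [SimpleGraph.Walk.support_reverse]
      simpa using hvP
    have hQ'path : (P'.concat hu'v).IsPath := by
      rw [← SimpleGraph.Walk.isPath_reverse_iff, SimpleGraph.Walk.reverse_concat,
        SimpleGraph.Walk.cons_isPath_iff]
      refine ⟨hP'.reverse, ?_⟩
      rw [SimpleGraph.Walk.support_reverse]
      simpa using hvP'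
    have heq := hacyc.path_unique ⟨P.concat huv, hQpath⟩ ⟨P'.concat hu'v, hQ'path⟩
    have heqw : (P.concat huv) = (P'.concat hu'v) := congrArg Subtype.val heq
    have hsupp : (P.concat huv).support = (P'.concat hu'v).support := by rw [heqw]
    rw [SimpleGraph.Walk.support_concat, SimpleGraph.Walk.support_concat] at hsupp
    have hsupp' : P.support = P'.support := by
      have h1 : P.support ++ [v] = P'.support ++ [v] := by
        simpa [List.concat_eq_append] using hsupp
      exact List.append_inj_left' h1 rfl
    have hs : P.reverse.support = P'.reverse.support := by
      rw [SimpleGraph.Walk.support_reverse, SimpleGraph.Walk.support_reverse, hsupp']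
    have h2 := SimpleGraph.Walk.support_eq_cons P.reverse
    have h2' := SimpleGraph.Walk.support_eq_cons P'.reverse
    rw [hs] at h2
    rw [h2'] at h2
    injection h2 with h3 _
    exact h3.symm
  -- choose parents
  set par : V → V := fun v =>
    if h : 0 < d v then Classical.choose (hpar_ex v h) else v with hpardef
  have hpar_spec : ∀ v, 0 < d v → G.Adj (par v) v ∧ d (par v) + 1 = d v := by
    intro v hv
    have : par v = Classical.choose (hpar_ex v hv) := by
      simp [hpardef, hv]
    rw [this]
    exact Classical.choose_spec (hpar_ex v hv)
  have hpar_eq : ∀ {u v : V}, G.Adj u v → d u + 1 = d v → par v = u := by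
    intro u v huv hd
    have hv : 0 < d v := by omega
    obtain ⟨h1, h2⟩ := hpar_spec v hv
    exact hpar_uniq h1 huv h2 hd
  -- the layout
  set F : V → ℕ := fun v => treeOneQueueF par g n (d v) v with hFdef
  have hF_lt : ∀ v, F v < n ^ n := by
    intro v
    have h1 : F v < n ^ (d v + 1) := treeOneQueueF_lt par g n hg_lt (d v) v
    have h2 : n ^ (d v + 1) ≤ n ^ n := Nat.pow_le_pow_right hn0 (hd_lt v)
    omega
  have hF_step : ∀ v, 0 < d v → F v = F (par v) * n + g v := by
    intro v hv
    obtain ⟨_, h2⟩ := hpar_spec v hv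
    have : d v = d (par v) + 1 := h2.symm
    simp only [hFdef]
    rw [this]
    rfl
  set f : V → ℕ := fun v => F v + n ^ n * d v with hfdef
  have hf_d : ∀ v, f v / n ^ n = d v := by
    intro v
    simp only [hfdef]
    rw [Nat.add_mul_div_left _ _ (Nat.pow_pos hn0), Nat.div_eq_of_lt (hF_lt v)]
    omega
  have hf_F : ∀ v, f v % n ^ n = F v := by
    intro v
    simp only [hfdef]
    rw [Nat.add_mul_mod_self_left, Nat.mod_eq_of_lt (hF_lt v)]
  have hf_mono_d : ∀ {x y : V}, f x < f y → d x ≤ d y := by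
    intro x y h
    by_contra hc
    push_neg at hc
    have h1 : f y < n ^ n * d y + n ^ n := by
      have := hF_lt y
      simp only [hfdef]
      omega
    have h2 : n ^ n * d y + n ^ n ≤ n ^ n * d x := by
      calc n ^ n * d y + n ^ n = n ^ n * (d y + 1) := by ring
        _ ≤ n ^ n * d x := Nat.mul_le_mul_left _ hc
    have h3 : n ^ n * d x ≤ f x := by simp only [hfdef]; omega
    omega
  have hf_same : ∀ {x y : V}, f x < f y → d x = d y → F x < F y := by
    intro x y h hd
    simp only [hfdef] at h
    rw [hd] at h
    omega
  -- injectivity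
  have hinj : Function.Injective f := by
    intro x y h
    have hd : d x = d y := by rw [← hf_d x, ← hf_d y, h]
    have hF : F x = F y := by rw [← hf_F x, ← hf_F y, h]
    have hgx : g x = g y := by
      have h1 := treeOneQueueF_mod par g n hg_lt (d x) x
      have h2 := treeOneQueueF_mod par g n hg_lt (d y) y
      simp only [hFdef] at hF
      rw [← h1, ← h2, hF]
    exact hg_inj hgx
  refine ⟨f, hinj, ?_⟩
  intro a b c d' hab hcd hfab hfcd _ _ _ _ ⟨h1, h2, h3⟩
  -- depths
  have hdb : d b = d a + 1 := by
    rcases hadj_step hab with h | h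
    · exact h
    · exact absurd (hf_mono_d hfab) (by omega)
  have hdd : d d' = d c + 1 := by
    rcases hadj_step hcd with h | h
    · exact h
    · exact absurd (hf_mono_d hfcd) (by omega)
  have hac : d a ≤ d c := hf_mono_d h1
  have hdb' : d d' ≤ d b := hf_mono_d h3
  have hdeq : d a = d c := by omega
  have hdeq2 : d b = d d' := by omega
  have hFac : F a < F c := hf_same h1 hdeq
  have hFdb : F d' < F b := hf_same h3 hdeq2.symm
  have hparb : par b = a := hpar_eq hab (by omega)
  have hpard : par d' = c := hpar_eq hcd (by omega)
  have hFb : F b = F a * n + g b := by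
    rw [hF_step b (by omega), hparb]
  have hFd : F d' = F c * n + g d' := by
    rw [hF_step d' (by omega), hpard]
  have hgb : g b < n := hg_lt b
  have : F b < F d' := by
    calc F b = F a * n + g b := hFb
      _ < (F a + 1) * n := by rw [Nat.succ_mul]; omega
      _ ≤ F c * n := Nat.mul_le_mul_right _ (by omega)
      _ ≤ F c * n + g d' := Nat.le_add_right _ _
      _ = F d' := hFd.symm
  omega
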